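/- Let A be a signed interaction matrix. (i) If A has at least one strictly negative entry, then for every μ ∈ ℝ with μ ≠ 0 and every initial vector b₀ ∈ ℝ^n, the iterates A^t b₀ do not converge to the constant vector (μ,…,μ). (ii) If A is reverse opposition bipartite, then there exists b₀ ∈ ℝ^n such that A^t b₀ does not converge to the zero vector. (iii) If moreover A is strongly connected, then A^t b₀ → 0 for every b₀ ∈ ℝ^n if and only if A is neither opposition bipartite nor reverse opposition bipartite. -/

import Mathlib

open Filter

variable {n : ℕ}

/-- Entrywise absolute value of a matrix. -/
def absMat (A : Matrix (Fin n) (Fin n) ℝ) : Matrix (Fin n) (Fin n) ℝ :=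
  A.map fun x => |x|

/-- `A` is strongly connected: for all `i j` there is `k ≥ 1` with `(|A|^k)_{ij} > 0`. -/
def StronglyConnected (A : Matrix (Fin n) (Fin n) ℝ) : Prop :=
  ∀ i j, ∃ k : ℕ, 1 ≤ k ∧ 0 < (absMat A ^ k) i j

/-- `A` is aperiodic: for each `i`, the gcd of `{k ≥ 1 : (|A|^k)_{ii} > 0}` is `1`,
phrased as: every common divisor of that set equals `1`. -/
def Aperiodic (A : Matrix (Fin n) (Fin n) ℝ) : Prop :=
  ∀ i, ∀ d : ℕ, (∀ k : ℕ, 1 ≤ k → 0 < (absMat A ^ k) i i → d ∣ k) → d = 1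

/-- `A` is opposition bipartite: a two-set partition (given by `S` and its
complement) with nonnegative entries within sets and nonpositive across. -/
def OppBip (A : Matrix (Fin n) (Fin n) ℝ) : Prop :=
  ∃ S : Set (Fin n), ∀ i j,
    (((i ∈ S ∧ j ∈ S) ∨ (i ∉ S ∧ j ∉ S)) → 0 ≤ A i j) ∧
    (((i ∈ S ∧ j ∉ S) ∨ (i ∉ S ∧ j ∈ S)) → A i j ≤ 0)

/-- `A` is reverse opposition bipartite: nonpositive entries within sets and
nonnegative across. -/
def RevOppBip (A : Matrix (Fin n) (Fin n) ℝ) : Prop :=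
  ∃ S : Set (Fin n), ∀ i j,
    (((i ∈ S ∧ j ∈ S) ∨ (i ∉ S ∧ j ∉ S)) → A i j ≤ 0) ∧
    (((i ∈ S ∧ j ∉ S) ∨ (i ∉ S ∧ j ∈ S)) → 0 ≤ A i j)

/-- `A` is divergent: some initial vector has no limit under iteration. -/
def Divergent (A : Matrix (Fin n) (Fin n) ℝ) : Prop :=
  ∃ b₀ : Fin n → ℝ, ¬ ∃ L : Fin n → ℝ,
    Tendsto (fun t => (A ^ t).mulVec b₀) atTop (nhds L)

/-- `A` induces a neutral consensus: iterates converge to `0` from every start. -/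
def NeutralConsensus (A : Matrix (Fin n) (Fin n) ℝ) : Prop :=
  ∀ b₀ : Fin n → ℝ, Tendsto (fun t => (A ^ t).mulVec b₀) atTop (nhds 0)

/-- A vector is a polarization if its entries take at most two values. -/
def IsPolarization (p : Fin n → ℝ) : Prop :=
  ∃ a b : ℝ, ∀ i, p i = a ∨ p i = b

/-- `A` induces a nontrivial polarization: from every start the limit exists
and is a polarization, and from some start the limit is nonzero. -/
def InducesNontrivialPolarization (A : Matrix (Fin n) (Fin n) ℝ) : Prop :=
  (∀ b₀ : Fin n → ℝ, ∃ L : Fin n → ℝ,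
      Tendsto (fun t => (A ^ t).mulVec b₀) atTop (nhds L) ∧ IsPolarization L) ∧
  (∃ (b₀ L : Fin n → ℝ),
      Tendsto (fun t => (A ^ t).mulVec b₀) atTop (nhds L) ∧ L ≠ 0)

/-- no wisdom for signed interaction matrices. (i) any strictly
negative entry rules out convergence to a nonzero consensus; (ii) reverse
opposition bipartiteness rules out convergence to `0` from some start;
(iii) under strong connectivity, convergence to `0` from every start holds iff
`A` is neither opposition bipartite nor reverse opposition bipartite. -/
lemma absMat_pow_nonneg (A : Matrix (Fin n) (Fin n) ℝ) (k : ℕ) (i j : Fin n) :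
    0 ≤ (absMat A ^ k) i j := by
  induction k generalizing i j with
  | zero => simp [Matrix.one_apply]; positivity
  | succ k ih =>
    rw [pow_succ, Matrix.mul_apply]
    exact Finset.sum_nonneg fun l _ => mul_nonneg (ih i l) (abs_nonneg _)

/-- Key Perron-Frobenius style lemma. -/
lemma eig_abs_lt_one {A : Matrix (Fin n) (Fin n) ℝ}
    (hsym : A.IsSymm) (hrow : ∀ i, ∑ j, |A i j| = 1)
    (hsc : StronglyConnected A) (hOpp : ¬ OppBip A) (hRev : ¬ RevOppBip A)
    {lam : ℝ} {v : Fin n → ℝ} (hv : v ≠ 0) (heig : A.mulVec v = lam • v) :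
    |lam| < 1 := by
  classical
  set w : Fin n → ℝ := fun i => |v i| with hw
  have hsymm : ∀ i j, A i j = A j i := fun i j => by
    conv_rhs => rw [← hsym]
    rfl
  have heigi : ∀ i, ∑ j, A i j * v j = lam * v i := by
    intro i
    have := congrFun heig i
    simpa [Matrix.mulVec, dotProduct] using this
  have h1 : ∀ i, |lam| * w i ≤ ∑ j, |A i j| * w j := by
    intro i
    calc |lam| * w i = |∑ j, A i j * v j| := by rw [heigi i, abs_mul]
    _ ≤ ∑ j, |A i j * v j| := Finset.abs_sum_le_sum_abs _ _
    _ = ∑ j, |A i j| * w j := by simp [abs_mul, hw]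
  have hsum2 : ∑ i, ∑ j, |A i j| * w j = ∑ i, w i := by
    rw [Finset.sum_comm]
    have : ∀ j : Fin n, ∑ i, |A i j| * w j = w j := by
      intro j
      rw [← Finset.sum_mul]
      have : ∑ i, |A i j| = 1 := by
        rw [show (fun i => |A i j|) = fun i => |A j i| from funext fun i => by rw [hsymm]]
        exact hrow j
      rw [this, one_mul]
    simp_rw [this]
  have hwnonneg : ∀ i, 0 ≤ w i := fun i => abs_nonneg _
  have hwsum_pos : 0 < ∑ i, w i := by
    obtain ⟨i, hi⟩ := Function.ne_iff.mp hv
    exact Finset.sum_pos' (fun i _ => hwnonneg i) ⟨i, Finset.mem_univ i, abs_pos.mpr hi⟩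
  have hle : |lam| ≤ 1 := by
    have := Finset.sum_le_sum (fun i (_ : i ∈ Finset.univ) => h1 i)
    rw [← Finset.mul_sum, hsum2] at this
    nlinarith
  rcases lt_or_eq_of_le hle with h | habs1
  · exact h
  exfalso
  -- equality analysis
  have heq : ∀ i, w i = ∑ j, |A i j| * w j := by
    have hle' : ∀ i ∈ Finset.univ, w i ≤ ∑ j, |A i j| * w j := by
      intro i _
      have := h1 i
      rw [habs1, one_mul] at this
      exact this
    have hsum : ∑ i, w i = ∑ i, ∑ j, |A i j| * w j := hsum2.symm
    exact fun i => (Finset.sum_eq_sum_iff_of_le hle').mp hsum i (Finset.mem_univ i)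
  have hmw : (absMat A).mulVec w = w := by
    funext i
    simp only [Matrix.mulVec, dotProduct, absMat, Matrix.map_apply]
    exact (heq i).symm
  have hiter : ∀ k : ℕ, (absMat A ^ k).mulVec w = w := by
    intro k
    induction k with
    | zero => simp
    | succ k ih => rw [pow_succ, ← Matrix.mulVec_mulVec, hmw, ih]
  have hvpos : ∀ i, v i ≠ 0 := by
    intro i hi
    have hwzero : ∀ j, w j = 0 := by
      intro j
      obtain ⟨k, hk1, hkpos⟩ := hsc i j
      have h0 : ∑ j', (absMat A ^ k) i j' * w j' = 0 := by
        have := congrFun (hiter k) i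
        simp only [Matrix.mulVec, dotProduct] at this
        rw [this, hw]; simp [hi]
      have hterm : (absMat A ^ k) i j * w j = 0 := by
        have := (Finset.sum_eq_zero_iff_of_nonneg (fun j' _ =>
          mul_nonneg (absMat_pow_nonneg A k i j') (hwnonneg j'))).mp h0 j (Finset.mem_univ j)
        exact this
      have := mul_eq_zero.mp hterm
      rcases this with h | h
      · exact absurd h (ne_of_gt hkpos)
      · exact h
    apply hv
    funext j
    exact abs_eq_zero.mp (hwzero j)
  -- lam = 1 or lam = -1
  rcases (abs_eq (by norm_num : (0:ℝ) ≤ 1)).mp habs1 with hlam | hlam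
  · -- lam = 1 : OppBip
    apply hOpp
    refine ⟨{i | 0 < v i}, fun i j => ?_⟩
    have hterms : ∀ i, (0 < v i → ∀ j, 0 ≤ A i j * v j) ∧ (v i < 0 → ∀ j, A i j * v j ≤ 0) := by
      intro i
      have hsum_eq : ∑ j, A i j * v j = v i := by rw [heigi i, hlam, one_mul]
      have habs_eq : ∑ j, |A i j * v j| = |v i| := by
        have h := heq i
        simp only [hw] at h
        simpa [abs_mul] using h.symm
      constructor
      · intro hpos j
        have h0 : ∑ j, (|A i j * v j| - A i j * v j) = 0 := by
          rw [Finset.sum_sub_distrib, hsum_eq, habs_eq, abs_of_pos hpos, sub_self]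
        have := (Finset.sum_eq_zero_iff_of_nonneg (fun j' _ =>
          sub_nonneg.mpr (le_abs_self _))).mp h0 j (Finset.mem_univ j)
        nlinarith [abs_nonneg (A i j * v j)]
      · intro hneg j
        have h0 : ∑ j, (|A i j * v j| + A i j * v j) = 0 := by
          rw [Finset.sum_add_distrib, hsum_eq, habs_eq, abs_of_neg hneg]; ring
        have := (Finset.sum_eq_zero_iff_of_nonneg (fun j' _ => by
          nlinarith [neg_abs_le (A i j' * v j')])).mp h0 j (Finset.mem_univ j)
        nlinarith [abs_nonneg (A i j * v j)]
      
    constructor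
    · rintro (⟨hi, hj⟩ | ⟨hi, hj⟩)
      · have := (hterms i).1 hi j
        have hj' : 0 < v j := hj
        nlinarith
      · have hi' : v i < 0 := lt_of_le_of_ne (not_lt.mp hi) (hvpos i)
        have hj' : v j < 0 := lt_of_le_of_ne (not_lt.mp hj) (hvpos j)
        have := (hterms i).2 hi' j
        nlinarith
    · rintro (⟨hi, hj⟩ | ⟨hi, hj⟩)
      · have := (hterms i).1 hi j
        have hj' : v j < 0 := lt_of_le_of_ne (not_lt.mp hj) (hvpos j)
        nlinarith
      · have hi' : v i < 0 := lt_of_le_of_ne (not_lt.mp hi) (hvpos i)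
        have := (hterms i).2 hi' j
        have hj' : 0 < v j := hj
        nlinarith
  · -- lam = -1 : RevOppBip
    apply hRev
    refine ⟨{i | 0 < v i}, fun i j => ?_⟩
    have hterms : ∀ i, (0 < v i → ∀ j, A i j * v j ≤ 0) ∧ (v i < 0 → ∀ j, 0 ≤ A i j * v j) := by
      intro i
      have hsum_eq : ∑ j, A i j * v j = -v i := by rw [heigi i, hlam]; ring
      have habs_eq : ∑ j, |A i j * v j| = |v i| := by
        have h := heq i
        simp only [hw] at h
        simpa [abs_mul] using h.symm
      constructor
      · intro hpos j
        have h0 : ∑ j, (|A i j * v j| + A i j * v j) = 0 := by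
          rw [Finset.sum_add_distrib, hsum_eq, habs_eq, abs_of_pos hpos]; ring
        have := (Finset.sum_eq_zero_iff_of_nonneg (fun j' _ => by
          nlinarith [neg_abs_le (A i j' * v j')])).mp h0 j (Finset.mem_univ j)
        nlinarith [abs_nonneg (A i j * v j)]
      · intro hneg j
        have h0 : ∑ j, (|A i j * v j| - A i j * v j) = 0 := by
          rw [Finset.sum_sub_distrib, hsum_eq, habs_eq, abs_of_neg hneg]; ring
        have := (Finset.sum_eq_zero_iff_of_nonneg (fun j' _ =>
          sub_nonneg.mpr (le_abs_self _))).mp h0 j (Finset.mem_univ j)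
        nlinarith [abs_nonneg (A i j * v j)]
    constructor
    · rintro (⟨hi, hj⟩ | ⟨hi, hj⟩)
      · have := (hterms i).1 hi j
        have hj' : 0 < v j := hj
        nlinarith
      · have hi' : v i < 0 := lt_of_le_of_ne (not_lt.mp hi) (hvpos i)
        have hj' : v j < 0 := lt_of_le_of_ne (not_lt.mp hj) (hvpos j)
        have := (hterms i).2 hi' j
        nlinarith
    · rintro (⟨hi, hj⟩ | ⟨hi, hj⟩)
      · have := (hterms i).1 hi j
        have hj' : v j < 0 := lt_of_le_of_ne (not_lt.mp hj) (hvpos j)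
        nlinarith
      · have hi' : v i < 0 := lt_of_le_of_ne (not_lt.mp hi) (hvpos i)
        have := (hterms i).2 hi' j
        have hj' : 0 < v j := hj
        nlinarith

lemma pow_spectral {A : Matrix (Fin n) (Fin n) ℝ} (hA : A.IsHermitian) (t : ℕ) :
    A ^ t = (hA.eigenvectorUnitary : Matrix (Fin n) (Fin n) ℝ)
      * Matrix.diagonal (fun i => hA.eigenvalues i ^ t)
      * star (hA.eigenvectorUnitary : Matrix (Fin n) (Fin n) ℝ) := by
  set U := (hA.eigenvectorUnitary : Matrix (Fin n) (Fin n) ℝ) with hU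
  have hUU : star U * U = 1 := by
    exact Matrix.UnitaryGroup.star_mul_self hA.eigenvectorUnitary
  have hUU' : U * star U = 1 :=
    Matrix.mem_unitaryGroup_iff.mp hA.eigenvectorUnitary.2
  have hspec : A = U * Matrix.diagonal (fun i => hA.eigenvalues i) * star U := by
    have := hA.spectral_theorem
    simpa using this
  induction t with
  | zero =>
    simp [Matrix.diagonal_one, hUU']
  | succ t ih =>
    have key : ∀ D E : Matrix (Fin n) (Fin n) ℝ,
        (U * D * star U) * (U * E * star U) = U * (D * (star U * U) * E) * star U := by
      intro D E; noncomm_ring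
    rw [pow_succ, ih]
    have hstep : (U * Matrix.diagonal (fun i => hA.eigenvalues i ^ t) * star U) * A
        = (U * Matrix.diagonal (fun i => hA.eigenvalues i ^ t) * star U) *
          (U * Matrix.diagonal (fun i => hA.eigenvalues i) * star U) := by rw [← hspec]
    rw [hstep, key, hUU, mul_one, Matrix.diagonal_mul_diagonal]
    simp [pow_succ]

lemma tendsto_zero_of_eigs {A : Matrix (Fin n) (Fin n) ℝ} (hA : A.IsHermitian)
    (hlt : ∀ i, |hA.eigenvalues i| < 1) (b₀ : Fin n → ℝ) :
    Tendsto (fun t => (A ^ t).mulVec b₀) atTop (nhds 0) := by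
  set U := (hA.eigenvectorUnitary : Matrix (Fin n) (Fin n) ℝ) with hU
  have hD : Tendsto (fun t => Matrix.diagonal (fun i => hA.eigenvalues i ^ t))
      atTop (nhds (0 : Matrix (Fin n) (Fin n) ℝ)) := by
    refine tendsto_pi_nhds.mpr ?_
    intro i
    rw [tendsto_pi_nhds]
    intro j
    by_cases h : i = j
    · subst h
      simpa [Matrix.diagonal_apply_eq] using
        tendsto_pow_atTop_nhds_zero_of_abs_lt_one (hlt i)
    · simp [Matrix.diagonal_apply_ne _ h]
  have hcont : Continuous fun M : Matrix (Fin n) (Fin n) ℝ => (U * M * star U).mulVec b₀ :=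
    ((continuous_const.matrix_mul continuous_id).matrix_mul continuous_const).matrix_mulVec
      continuous_const
  have := (hcont.tendsto (0 : Matrix (Fin n) (Fin n) ℝ)).comp hD
  simp only [Function.comp_def] at this
  have h0 : (U * 0 * star U).mulVec b₀ = (0 : Fin n → ℝ) := by
    simp
  rw [h0] at this
  have heq : (fun t => (A ^ t).mulVec b₀)
      = fun t => (U * Matrix.diagonal (fun i => hA.eigenvalues i ^ t) * star U).mulVec b₀ := by
    funext t; rw [pow_spectral hA t]
  rw [heq]
  exact this

lemma sign_mulVec_opp {A : Matrix (Fin n) (Fin n) ℝ} (hrow : ∀ i, ∑ j, |A i j| = 1)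
    {S : Set (Fin n)} (σ : Fin n → ℝ)
    (hσ : ∀ i, (i ∈ S → σ i = 1) ∧ (i ∉ S → σ i = -1))
    (hS : ∀ i j,
      (((i ∈ S ∧ j ∈ S) ∨ (i ∉ S ∧ j ∉ S)) → 0 ≤ A i j) ∧
      (((i ∈ S ∧ j ∉ S) ∨ (i ∉ S ∧ j ∈ S)) → A i j ≤ 0)) :
    A.mulVec σ = σ := by
  classical
  funext i
  simp only [Matrix.mulVec, dotProduct]
  by_cases hi : i ∈ S
  · have : ∀ j, A i j * σ j = |A i j| := by
      intro j
      by_cases hj : j ∈ S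
      · rw [(hσ j).1 hj, mul_one, abs_of_nonneg ((hS i j).1 (Or.inl ⟨hi, hj⟩))]
      · rw [(hσ j).2 hj, abs_of_nonpos ((hS i j).2 (Or.inl ⟨hi, hj⟩))]; ring
    simp_rw [this]
    rw [hrow i, (hσ i).1 hi]
  · have : ∀ j, A i j * σ j = -|A i j| := by
      intro j
      by_cases hj : j ∈ S
      · rw [(hσ j).1 hj, mul_one, abs_of_nonpos ((hS i j).2 (Or.inr ⟨hi, hj⟩))]; ring
      · rw [(hσ j).2 hj, abs_of_nonneg ((hS i j).1 (Or.inr ⟨hi, hj⟩))]; ring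
    simp_rw [this]
    rw [Finset.sum_neg_distrib, hrow i, (hσ i).2 hi]

lemma sign_mulVec_rev {A : Matrix (Fin n) (Fin n) ℝ} (hrow : ∀ i, ∑ j, |A i j| = 1)
    {S : Set (Fin n)} (σ : Fin n → ℝ)
    (hσ : ∀ i, (i ∈ S → σ i = 1) ∧ (i ∉ S → σ i = -1))
    (hS : ∀ i j,
      (((i ∈ S ∧ j ∈ S) ∨ (i ∉ S ∧ j ∉ S)) → A i j ≤ 0) ∧
      (((i ∈ S ∧ j ∉ S) ∨ (i ∉ S ∧ j ∈ S)) → 0 ≤ A i j)) :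
    A.mulVec σ = -σ := by
  classical
  funext i
  simp only [Matrix.mulVec, dotProduct, Pi.neg_apply]
  by_cases hi : i ∈ S
  · have : ∀ j, A i j * σ j = -|A i j| := by
      intro j
      by_cases hj : j ∈ S
      · rw [(hσ j).1 hj, mul_one, abs_of_nonpos ((hS i j).1 (Or.inl ⟨hi, hj⟩))]; ring
      · rw [(hσ j).2 hj, abs_of_nonneg ((hS i j).2 (Or.inl ⟨hi, hj⟩))]; ring
    simp_rw [this]
    rw [Finset.sum_neg_distrib, hrow i, (hσ i).1 hi]
  · have : ∀ j, A i j * σ j = |A i j| := by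
      intro j
      by_cases hj : j ∈ S
      · rw [(hσ j).1 hj, mul_one, abs_of_nonneg ((hS i j).2 (Or.inr ⟨hi, hj⟩))]
      · rw [(hσ j).2 hj, abs_of_nonpos ((hS i j).1 (Or.inr ⟨hi, hj⟩))]; ring
    simp_rw [this]
    rw [hrow i, (hσ i).2 hi]; ring

lemma iter_fixed {A : Matrix (Fin n) (Fin n) ℝ} {σ : Fin n → ℝ} (h : A.mulVec σ = σ) (t : ℕ) :
    (A ^ t).mulVec σ = σ := by
  induction t with
  | zero => simp
  | succ t ih => rw [pow_succ, ← Matrix.mulVec_mulVec, h, ih]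

lemma iter_flip {A : Matrix (Fin n) (Fin n) ℝ} {σ : Fin n → ℝ} (h : A.mulVec σ = -σ) (t : ℕ) :
    (A ^ t).mulVec σ = ((-1 : ℝ) ^ t) • σ := by
  induction t with
  | zero => simp
  | succ t ih =>
    rw [pow_succ, ← Matrix.mulVec_mulVec, h, Matrix.mulVec_neg, ih]
    rw [pow_succ, mul_neg_one, neg_smul]

theorem stmt_16 (n : ℕ) (hn : 2 ≤ n) (A : Matrix (Fin n) (Fin n) ℝ)
    (hsym : A.IsSymm) (hdiag : ∀ i, A i i = 0) (hrow : ∀ i, ∑ j, |A i j| = 1) :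
    ((∃ i j, A i j < 0) → ∀ μ : ℝ, μ ≠ 0 → ∀ b₀ : Fin n → ℝ,
        ¬ Tendsto (fun t => (A ^ t).mulVec b₀) atTop (nhds fun _ => μ)) ∧
    (RevOppBip A → ∃ b₀ : Fin n → ℝ,
        ¬ Tendsto (fun t => (A ^ t).mulVec b₀) atTop (nhds 0)) ∧
    (StronglyConnected A →
      ((∀ b₀ : Fin n → ℝ, Tendsto (fun t => (A ^ t).mulVec b₀) atTop (nhds 0)) ↔
        (¬ OppBip A ∧ ¬ RevOppBip A))) := by
  classical
  have hA' : A.IsHermitian := by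
    rw [Matrix.IsHermitian, Matrix.conjTranspose_eq_transpose_of_trivial]
    exact hsym
  have i0 : Fin n := ⟨0, by omega⟩
  -- helper: RevOppBip gives a non-converging start
  have part2 : RevOppBip A → ∃ b₀ : Fin n → ℝ,
      ¬ Tendsto (fun t => (A ^ t).mulVec b₀) atTop (nhds 0) := by
    rintro ⟨S, hS⟩
    set σ : Fin n → ℝ := fun i => if i ∈ S then 1 else -1 with hσdef
    have hσ : ∀ i, (i ∈ S → σ i = 1) ∧ (i ∉ S → σ i = -1) := by
      intro i; constructor <;> intro h <;> simp [hσdef, h]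
    refine ⟨σ, fun htend => ?_⟩
    have hflip := sign_mulVec_rev hrow σ hσ hS
    have h2 : Tendsto (fun k : ℕ => (A ^ (2 * k)).mulVec σ) atTop (nhds 0) :=
      htend.comp (Filter.tendsto_atTop_atTop.mpr fun b => ⟨b, fun a ha => by omega⟩)
    have hconst : (fun k : ℕ => (A ^ (2 * k)).mulVec σ) = fun _ => σ := by
      funext k
      rw [iter_flip hflip, pow_mul]
      norm_num
    rw [hconst] at h2
    have hσ0 : σ = 0 := tendsto_nhds_unique tendsto_const_nhds h2
    have := congrFun hσ0 i0
    by_cases h : i0 ∈ S <;> simp [hσdef, h] at this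
  refine ⟨?_, part2, ?_⟩
  · -- part (i)
    rintro ⟨i, j, hneg⟩ μ hμ b₀ htend
    have hshift : Tendsto (fun t => (A ^ (t + 1)).mulVec b₀) atTop (nhds fun _ => μ) :=
      htend.comp (tendsto_add_atTop_nat 1)
    have hform : (fun t => (A ^ (t + 1)).mulVec b₀)
        = fun t => A.mulVec ((A ^ t).mulVec b₀) := by
      funext t
      rw [pow_succ', Matrix.mulVec_mulVec]
    rw [hform] at hshift
    have hcont : Continuous fun v : Fin n → ℝ => A.mulVec v :=
      continuous_const.matrix_mulVec continuous_id
    have h2 : Tendsto (fun t => A.mulVec ((A ^ t).mulVec b₀)) atTop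
        (nhds (A.mulVec fun _ => μ)) := (hcont.tendsto _).comp htend
    have hfix : A.mulVec (fun _ => μ) = fun _ => μ := tendsto_nhds_unique h2 hshift
    have hrowi : ∑ j', A i j' * μ = μ := by
      have := congrFun hfix i
      simpa [Matrix.mulVec, dotProduct] using this
    have hlt : ∑ j', A i j' < 1 := by
      have h1 : ∑ j', A i j' < ∑ j', |A i j'| :=
        Finset.sum_lt_sum (fun j' _ => le_abs_self _)
          ⟨j, Finset.mem_univ j, lt_of_lt_of_le hneg (abs_nonneg _)⟩
      rw [hrow i] at h1
      exact h1
    have hsum1 : (∑ j', A i j') * μ = 1 * μ := by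
      rw [Finset.sum_mul, one_mul]
      exact hrowi
    have := mul_right_cancel₀ hμ hsum1
    linarith
  · -- part (iii)
    intro hsc
    constructor
    · intro hNC
      constructor
      · rintro ⟨S, hS⟩
        set σ : Fin n → ℝ := fun i => if i ∈ S then 1 else -1 with hσdef
        have hσ : ∀ i, (i ∈ S → σ i = 1) ∧ (i ∉ S → σ i = -1) := by
          intro i; constructor <;> intro h <;> simp [hσdef, h]
        have hfix := sign_mulVec_opp hrow σ hσ hS
        have h2 := hNC σ
        have hconst : (fun t : ℕ => (A ^ t).mulVec σ) = fun _ => σ := by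
          funext t; exact iter_fixed hfix t
        rw [hconst] at h2
        have hσ0 : σ = 0 := tendsto_nhds_unique tendsto_const_nhds h2
        have := congrFun hσ0 i0
        by_cases h : i0 ∈ S <;> simp [hσdef, h] at this
      · intro hrev
        obtain ⟨b₀, hb⟩ := part2 hrev
        exact hb (hNC b₀)
    · rintro ⟨hOpp, hRev⟩ b₀
      apply tendsto_zero_of_eigs hA' _ b₀
      intro i
      have hv : (⇑(hA'.eigenvectorBasis i) : Fin n → ℝ) ≠ 0 := by
        intro h
        exact hA'.eigenvectorBasis.orthonormal.ne_zero i (by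
          apply PiLp.ext
          intro j
          exact congrFun h j)
      exact eig_abs_lt_one hsym hrow hsc hOpp hRev hv (hA'.mulVec_eigenvectorBasis i)
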